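/- Let 𝕂 be ℝ or ℂ, V a 𝕂-vector space, U : V³ → 𝕂 an arbitrary trilinear map, ε ∈ {1,−1}, and W : V² → 𝕂 a bilinear map satisfying W(y,x) = ε·W(x,y) for all x,y ∈ V. Define the 5-linear maps U⊗W : (v₁,…,v₅) ↦ U(v₁,v₂,v₃)·W(v₄,v₅) and W⊗U : (v₁,…,v₅) ↦ W(v₁,v₂)·U(v₃,v₄,v₅). Then y_{t'}*(U⊗W) = ε·y_{t'}*(W⊗U). -/

import Mathlib

/-- The action of a group-algebra element `a ∈ 𝕂[S_r]` on an `r`-linear map: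
`(aT)(v₁,…,v_r) = Σ_p a(p)·T(v_{p(1)},…,v_{p(r)})`. -/
noncomputable def gaAct {𝕂 : Type*} [RCLike 𝕂] {V : Type*} [AddCommGroup V] [Module 𝕂 V]
    {r : ℕ} (a : MonoidAlgebra 𝕂 (Equiv.Perm (Fin r)))
    (T : MultilinearMap 𝕂 (fun _ : Fin r => V) 𝕂) :
    MultilinearMap 𝕂 (fun _ : Fin r => V) 𝕂 :=
  ∑ p : Equiv.Perm (Fin r), a.coeff p • T.domDomCongr p

/-- The star map `a = Σ_p a(p)·p ↦ a* = Σ_p a(p)·p⁻¹` on the group algebra. -/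
noncomputable def gaStar {𝕂 : Type*} [RCLike 𝕂] {r : ℕ}
    (a : MonoidAlgebra 𝕂 (Equiv.Perm (Fin r))) : MonoidAlgebra 𝕂 (Equiv.Perm (Fin r)) :=
  ∑ p : Equiv.Perm (Fin r), MonoidAlgebra.single p⁻¹ (a.coeff p)

/-- The horizontal group `H_{t'}` of the tableau `t'` with rows `(1,3,5)` and `(2,4)`
(0-based: rows `{0,2,4}` and `{1,3}`): all permutations mapping each row to itself. -/
def horizT' : Finset (Equiv.Perm (Fin 5)) :=
  Finset.univ.filter fun p =>
    (∀ i ∈ ({0, 2, 4} : Finset (Fin 5)), p i ∈ ({0, 2, 4} : Finset (Fin 5))) ∧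
    (∀ i ∈ ({1, 3} : Finset (Fin 5)), p i ∈ ({1, 3} : Finset (Fin 5)))

/-- The vertical group `V_{t'}` of `t'`: all permutations mapping each of the columns
`{1,2}` and `{3,4}` (0-based `{0,1}`, `{2,3}`) to itself and fixing `5` (0-based `4`). -/
def vertT' : Finset (Equiv.Perm (Fin 5)) :=
  Finset.univ.filter fun p =>
    (∀ i ∈ ({0, 1} : Finset (Fin 5)), p i ∈ ({0, 1} : Finset (Fin 5))) ∧
    (∀ i ∈ ({2, 3} : Finset (Fin 5)), p i ∈ ({2, 3} : Finset (Fin 5))) ∧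
    p 4 = 4

/-- The Young symmetrizer `y_{t'} = Σ_{p∈H_{t'}} Σ_{q∈V_{t'}} sign(q)·(p∘q)`. -/
noncomputable def youngT' (𝕂 : Type*) [RCLike 𝕂] : MonoidAlgebra 𝕂 (Equiv.Perm (Fin 5)) :=
  ∑ p ∈ horizT', ∑ q ∈ vertT',
    MonoidAlgebra.single (p * q) (((Equiv.Perm.sign q : ℤ) : 𝕂))


section Aux

variable {𝕂 : Type*} [RCLike 𝕂] {V : Type*} [AddCommGroup V] [Module 𝕂 V] {r : ℕ}

lemma gaStar_single (g : Equiv.Perm (Fin r)) (c : 𝕂) :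
    gaStar (MonoidAlgebra.single g c) = MonoidAlgebra.single g⁻¹ c := by
  unfold gaStar
  rw [Finset.sum_eq_single g]
  · rw [MonoidAlgebra.single_apply, if_pos rfl]
  · intro p _ hp
    rw [MonoidAlgebra.single_apply, if_neg (Ne.symm hp)]
    simp
  · simp

lemma gaAct_single (g : Equiv.Perm (Fin r)) (c : 𝕂)
    (T : MultilinearMap 𝕂 (fun _ : Fin r => V) 𝕂) :
    gaAct (MonoidAlgebra.single g c) T = c • T.domDomCongr g := by
  unfold gaAct
  rw [Finset.sum_eq_single g]
  · rw [MonoidAlgebra.single_apply, if_pos rfl]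
  · intro p _ hp
    rw [MonoidAlgebra.single_apply, if_neg (Ne.symm hp)]
    simp
  · simp

lemma gaStar_sum {ι : Type*} (s : Finset ι) (f : ι → MonoidAlgebra 𝕂 (Equiv.Perm (Fin r))) :
    gaStar (∑ i ∈ s, f i) = ∑ i ∈ s, gaStar (f i) := by
  unfold gaStar
  rw [Finset.sum_comm]
  refine Finset.sum_congr rfl fun p _ => ?_
  rw [MonoidAlgebra.coeff_sum, Finsupp.finset_sum_apply]
  exact map_sum (MonoidAlgebra.singleAddHom p⁻¹) (fun i => (f i).coeff p) s

lemma gaAct_sum {ι : Type*} (s : Finset ι) (f : ι → MonoidAlgebra 𝕂 (Equiv.Perm (Fin r)))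
    (T : MultilinearMap 𝕂 (fun _ : Fin r => V) 𝕂) :
    gaAct (∑ i ∈ s, f i) T = ∑ i ∈ s, gaAct (f i) T := by
  unfold gaAct
  rw [Finset.sum_comm]
  refine Finset.sum_congr rfl fun p _ => ?_
  rw [MonoidAlgebra.coeff_sum, Finsupp.finset_sum_apply, Finset.sum_smul]

lemma gaAct_gaStar_young (T : MultilinearMap 𝕂 (fun _ : Fin 5 => V) 𝕂) :
    gaAct (gaStar (youngT' 𝕂)) T =
      ∑ p ∈ horizT', ∑ q ∈ vertT',
        (((Equiv.Perm.sign q : ℤ) : 𝕂)) • T.domDomCongr (p * q)⁻¹ := by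
  unfold youngT'
  rw [gaStar_sum, gaAct_sum]
  refine Finset.sum_congr rfl fun p _ => ?_
  rw [gaStar_sum, gaAct_sum]
  refine Finset.sum_congr rfl fun q _ => ?_
  rw [gaStar_single, gaAct_single]

/-- The explicit permutation `c∘s` with values `(4,3,0,1,2)`. -/
def cs5 : Equiv.Perm (Fin 5) :=
  ⟨![4, 3, 0, 1, 2], ![2, 3, 4, 1, 0], by decide, by decide⟩

lemma cs5_mem_mul (p : Equiv.Perm (Fin 5)) (hp : p ∈ horizT') : cs5⁻¹ * p ∈ horizT' := by
  rw [horizT', Finset.mem_filter] at hp ⊢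
  obtain ⟨-, h1, h2⟩ := hp
  refine ⟨Finset.mem_univ _, fun i hi => ?_, fun i hi => ?_⟩
  · have := h1 i hi
    simp only [Equiv.Perm.mul_apply]
    revert this; generalize p i = j; revert j; decide
  · have := h2 i hi
    simp only [Equiv.Perm.mul_apply]
    revert this; generalize p i = j; revert j; decide

lemma cs5_mem_mul' (p : Equiv.Perm (Fin 5)) (hp : p ∈ horizT') : cs5 * p ∈ horizT' := by
  rw [horizT', Finset.mem_filter] at hp ⊢
  obtain ⟨-, h1, h2⟩ := hp
  refine ⟨Finset.mem_univ _, fun i hi => ?_, fun i hi => ?_⟩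
  · have := h1 i hi
    simp only [Equiv.Perm.mul_apply]
    revert this; generalize p i = j; revert j; decide
  · have := h2 i hi
    simp only [Equiv.Perm.mul_apply]
    revert this; generalize p i = j; revert j; decide

end Aux

/-- If `W(y,x) = ε·W(x,y)` with `ε = ±1`, then `y_{t'}*(U⊗W) = ε·y_{t'}*(W⊗U)`. -/
theorem stmt6 {𝕂 : Type*} [RCLike 𝕂] {V : Type*} [AddCommGroup V] [Module 𝕂 V]
    (U : MultilinearMap 𝕂 (fun _ : Fin 3 => V) 𝕂)
    (ε : 𝕂) (hε : ε = 1 ∨ ε = -1)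
    (W : MultilinearMap 𝕂 (fun _ : Fin 2 => V) 𝕂)
    (hW : ∀ x y : V, W ![y, x] = ε * W ![x, y])
    (TUW TWU : MultilinearMap 𝕂 (fun _ : Fin 5 => V) 𝕂)
    (hTUW : ∀ v : Fin 5 → V, TUW v = U ![v 0, v 1, v 2] * W ![v 3, v 4])
    (hTWU : ∀ v : Fin 5 → V, TWU v = W ![v 0, v 1] * U ![v 2, v 3, v 4]) :
    gaAct (gaStar (youngT' 𝕂)) TUW = ε • gaAct (gaStar (youngT' 𝕂)) TWU := by

  have key : ∀ g : Equiv.Perm (Fin 5),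
      TUW.domDomCongr g = ε • TWU.domDomCongr (g * cs5) := by
    intro g
    refine MultilinearMap.ext fun v => ?_
    simp only [MultilinearMap.domDomCongr_apply, MultilinearMap.smul_apply, smul_eq_mul,
      hTUW, hTWU, Equiv.Perm.mul_apply]
    have e0 : cs5 (0 : Fin 5) = 4 := rfl
    have e1 : cs5 (1 : Fin 5) = 3 := rfl
    have e2 : cs5 (2 : Fin 5) = 0 := rfl
    have e3 : cs5 (3 : Fin 5) = 1 := rfl
    have e4 : cs5 (4 : Fin 5) = 2 := rfl
    rw [e0, e1, e2, e3, e4, hW (v (g 3)) (v (g 4))]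
    rcases hε with h | h <;> subst h <;> ring
  rw [gaAct_gaStar_young, gaAct_gaStar_young]
  have hg : ∀ p q : Equiv.Perm (Fin 5), (p * q)⁻¹ * cs5 = ((cs5⁻¹ * p) * q)⁻¹ := by
    intro p q; group
  calc
    ∑ p ∈ horizT', ∑ q ∈ vertT',
        (((Equiv.Perm.sign q : ℤ) : 𝕂)) • TUW.domDomCongr (p * q)⁻¹
      = ∑ p ∈ horizT', ∑ q ∈ vertT', ε • ((((Equiv.Perm.sign q : ℤ) : 𝕂)) •
          TWU.domDomCongr ((cs5⁻¹ * p) * q)⁻¹) := by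
        refine Finset.sum_congr rfl fun p _ => Finset.sum_congr rfl fun q _ => ?_
        rw [key, hg, smul_comm]
    _ = ε • ∑ p ∈ horizT', ∑ q ∈ vertT', (((Equiv.Perm.sign q : ℤ) : 𝕂)) •
          TWU.domDomCongr ((cs5⁻¹ * p) * q)⁻¹ := by
        rw [Finset.smul_sum]
        exact Finset.sum_congr rfl fun p _ => (Finset.smul_sum).symm
    _ = ε • ∑ p ∈ horizT', ∑ q ∈ vertT', (((Equiv.Perm.sign q : ℤ) : 𝕂)) •
          TWU.domDomCongr (p * q)⁻¹ := by
        congr 1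
        refine Finset.sum_nbij' (fun p => cs5⁻¹ * p) (fun p => cs5 * p)
          (fun p hp => cs5_mem_mul p hp) (fun p hp => cs5_mem_mul' p hp)
          (fun p _ => by group) (fun p _ => by group) (fun p _ => rfl)
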